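/- Let k ⊆ K be a root extension of fields of characteristic p > 0, let m be a positive integer, and let D be a subring of the formal power series ring K[[X]] with k + X^m·K[[X]] ⊆ D ⊆ K[[X]]. Then D is a quasilocal AV-domain whose integral closure (in its quotient field K((X))) is K[[X]]. If moreover k ⊆ K is a bounded root extension, then D is an API-domain. -/

import Mathlib

/-- `D` is an almost valuation (AV-) domain: for all nonzero `a b : D` there is a positive
integer `n` with `a ^ n ∣ b ^ n` or `b ^ n ∣ a ^ n`. -/
def IsAVDomain (D : Type*) [CommRing D] : Prop :=
  ∀ a b : D, a ≠ 0 → b ≠ 0 → ∃ n : ℕ, 0 < n ∧ (a ^ n ∣ b ^ n ∨ b ^ n ∣ a ^ n)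

/-- `D` is an almost principal ideal (API-) domain: for every nonempty set `S` of nonzero
elements of `D` there is a positive integer `n` such that the ideal generated by the `n`-th
powers of the elements of `S` is principal. -/
def IsAPIDomain (D : Type*) [CommRing D] : Prop :=
  ∀ S : Set D, S.Nonempty → (∀ a ∈ S, a ≠ 0) →
    ∃ n : ℕ, 0 < n ∧ (Ideal.span ((fun a => a ^ n) '' S)).IsPrincipal

open PowerSeries in
/-- Subring of power series whose coefficients in degrees `0 < i < m` vanish. -/
def gapRing (K : Type*) [Field K] (m : ℕ) : Subring (PowerSeries K) where
  carrier := {f | ∀ i : ℕ, 0 < i → i < m → PowerSeries.coeff i f = 0}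
  zero_mem' := by intro i h1 h2; simp
  one_mem' := by
    intro i h1 h2
    simp [PowerSeries.coeff_one, Nat.pos_iff_ne_zero.mp h1]
  add_mem' := by
    intro f g hf hg i h1 h2
    simp only [map_add, hf i h1 h2, hg i h1 h2, add_zero]
  neg_mem' := by
    intro f hf i h1 h2
    simp only [map_neg, hf i h1 h2, neg_zero]
  mul_mem' := by
    intro f g hf hg i h1 h2
    rw [PowerSeries.coeff_mul]
    apply Finset.sum_eq_zero
    rintro ⟨j, l⟩ hjl
    rw [Finset.HasAntidiagonal.mem_antidiagonal] at hjl
    rcases Nat.eq_zero_or_pos j with hj | hj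
    · have hl : l = i := by omega
      rw [hl, hg i h1 h2, mul_zero]
    · rw [hf j hj (by omega), zero_mul]

lemma mem_gapRing {K : Type*} [Field K] {m : ℕ} {f : PowerSeries K} :
    f ∈ gapRing K m ↔ ∀ i : ℕ, 0 < i → i < m → PowerSeries.coeff i f = 0 := Iff.rfl

lemma pow_pow_mem_gapRing {K : Type*} [Field K] (p : ℕ) [Fact p.Prime] [CharP K p]
    {m e : ℕ} (hme : m ≤ p ^ e) (f : PowerSeries K) : f ^ p ^ e ∈ gapRing K m := by
  haveI : CharP (PowerSeries K) p := charP_of_injective_ringHom PowerSeries.C_injective p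
  obtain ⟨g, hg⟩ : (PowerSeries.X : PowerSeries K) ∣
      (f - PowerSeries.C (PowerSeries.constantCoeff f)) :=
    PowerSeries.X_dvd_iff.mpr (by simp)
  have hf : f = PowerSeries.C (PowerSeries.constantCoeff f) + PowerSeries.X * g := by
    rw [← hg]; ring
  intro i h1 h2
  rw [hf, add_pow_char_pow, map_add, ← map_pow, PowerSeries.coeff_C, if_neg (by omega),
    mul_pow]
  have hdvd : (PowerSeries.X : PowerSeries K) ^ (p ^ e) ∣
      PowerSeries.X ^ (p ^ e) * g ^ (p ^ e) := dvd_mul_right _ _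
  rw [PowerSeries.X_pow_dvd_iff.mp hdvd i (by omega), zero_add]

lemma main_pow {K : Type*} [Field K] (p : ℕ) [Fact p.Prime] [CharP K p] (k : Subfield K)
    {m : ℕ} {D : Subring (PowerSeries K)}
    (hD₁ : ∀ f : PowerSeries K, PowerSeries.constantCoeff f ∈ k →
      (∀ i : ℕ, 0 < i → i < m → PowerSeries.coeff i f = 0) → f ∈ D)
    {e n : ℕ} (hme : m ≤ p ^ e) (f : PowerSeries K)
    (hc : (PowerSeries.constantCoeff f) ^ n ∈ k) :
    f ^ (p ^ e * n) ∈ D ∧ f ^ (p ^ e * n) ∈ gapRing K m ∧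
      (PowerSeries.constantCoeff f) ^ (p ^ e * n) ∈ k := by
  have hgap : f ^ (p ^ e * n) ∈ gapRing K m := by
    rw [pow_mul]
    exact pow_mem (pow_pow_mem_gapRing p hme f) n
  have hck : (PowerSeries.constantCoeff f) ^ (p ^ e * n) ∈ k := by
    rw [mul_comm, pow_mul]
    exact pow_mem hc (p ^ e)
  refine ⟨hD₁ _ ?_ hgap, hgap, hck⟩
  rw [map_pow]
  exact hck

/-- if `k ⊆ K` is a root extension of fields of characteristic `p > 0`, `m` a
positive integer, and `D` a subring of `K[[X]]` with `k + X^m K[[X]] ⊆ D ⊆ K[[X]]`, then `D`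
is a quasilocal AV-domain whose integral closure in its quotient field `K((X))` is `K[[X]]`;
if moreover `k ⊆ K` is a bounded root extension, then `D` is an API-domain. -/
theorem stmt_16 (K : Type*) [Field K] (p : ℕ) (hp : p ≠ 0) [CharP K p]
    (k : Subfield K) (hroot : ∀ x : K, ∃ n : ℕ, 0 < n ∧ x ^ n ∈ k)
    (m : ℕ) (hm : 0 < m) (D : Subring (PowerSeries K))
    (hD₁ : ∀ f : PowerSeries K, PowerSeries.constantCoeff f ∈ k →
      (∀ i : ℕ, 0 < i → i < m → PowerSeries.coeff i f = 0) → f ∈ D) :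
    IsLocalRing D ∧ IsAVDomain D ∧
      (∀ x : LaurentSeries K,
        IsIntegral (D.map (HahnSeries.ofPowerSeries ℤ K)) x ↔
          x ∈ (HahnSeries.ofPowerSeries ℤ K).range) ∧
      ((∃ n : ℕ, 0 < n ∧ ∀ x : K, x ^ n ∈ k) → IsAPIDomain D) := by
  -- setup
  have hprime : p.Prime := by
    rcases CharP.char_is_prime_or_zero K p with h | h
    · exact h
    · exact absurd h hp
  haveI : Fact p.Prime := ⟨hprime⟩
  set e : ℕ := m with he
  have hme : m ≤ p ^ e := (Nat.lt_pow_self (n := m) hprime.one_lt).le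
  have hpe : 0 < p ^ e := pow_pos hprime.pos e
  -- units of D
  have hunit : ∀ a : D, PowerSeries.constantCoeff (a : PowerSeries K) ≠ 0 → IsUnit a := by
    intro a hc0
    obtain ⟨n, hn, hcn⟩ := hroot (PowerSeries.constantCoeff (a : PowerSeries K))
    obtain ⟨hgD, hgGap, hgk⟩ := main_pow p k hD₁ hme (a : PowerSeries K) hcn
    set N := p ^ e * n with hN
    have hNpos : 0 < N := Nat.mul_pos hpe hn
    set g : PowerSeries K := (a : PowerSeries K) ^ N with hgdef
    have hg0 : PowerSeries.constantCoeff g ≠ 0 := by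
      rw [hgdef, map_pow]; exact pow_ne_zero _ hc0
    have hgu : g * g⁻¹ = 1 := PowerSeries.mul_inv_cancel _ hg0
    have huD : g⁻¹ ∈ D := by
      apply hD₁
      · rw [PowerSeries.constantCoeff_inv, hgdef, map_pow]
        exact k.inv_mem hgk
      · intro i h1 h2
        have hco := congrArg (PowerSeries.coeff i) hgu
        rw [PowerSeries.coeff_mul, PowerSeries.coeff_one, if_neg (by omega),
          Finset.sum_eq_single (0, i)] at hco
        · rcases mul_eq_zero.mp hco with h | h
          · exact absurd ((PowerSeries.coeff_zero_eq_constantCoeff_apply g).symm.trans h) hg0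
          · exact h
        · rintro ⟨j, l⟩ hjl hne
          rw [Finset.HasAntidiagonal.mem_antidiagonal] at hjl
          rcases Nat.eq_zero_or_pos j with hj | hj
          · exact absurd (by simp [hj]; omega) hne
          · rw [hgGap j hj (by omega), zero_mul]
        · intro hni
          exact absurd (Finset.HasAntidiagonal.mem_antidiagonal.mpr (by omega)) hni
    refine IsUnit.of_mul_eq_one (a := a) (a ^ (N - 1) * ⟨g⁻¹, huD⟩) (Subtype.ext ?_)
    push_cast
    rw [← mul_assoc, ← pow_succ']
    have : N - 1 + 1 = N := by omega
    rw [this, ← hgdef, hgu]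
  -- nontriviality / domain
  haveI : Nontrivial D := by
    refine nontrivial_of_ne 0 1 fun h => ?_
    have := congrArg (Subtype.val) h
    exact zero_ne_one (α := PowerSeries K) this
  constructor
  · -- local
    refine IsLocalRing.of_nonunits_add ?_
    intro a b ha hb
    rw [mem_nonunits_iff] at ha hb ⊢
    have ha0 : PowerSeries.constantCoeff (a : PowerSeries K) = 0 := by
      by_contra h; exact ha (hunit a h)
    have hb0 : PowerSeries.constantCoeff (b : PowerSeries K) = 0 := by
      by_contra h; exact hb (hunit b h)
    intro hu
    have := (PowerSeries.isUnit_iff_constantCoeff).mp (hu.map D.subtype)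
    rw [show (D.subtype (a + b) : PowerSeries K) =
      (a : PowerSeries K) + (b : PowerSeries K) from rfl, map_add, ha0, hb0, add_zero] at this
    exact not_isUnit_zero this
  have key : ∀ x y : D, (x : PowerSeries K) ∣ (y : PowerSeries K) →
      ∃ n : ℕ, 0 < n ∧ x ^ n ∣ y ^ n := by
    rintro x y ⟨w, hw⟩
    obtain ⟨n, hn, hcn⟩ := hroot (PowerSeries.constantCoeff w)
    obtain ⟨hwD, -, -⟩ := main_pow p k hD₁ hme w hcn
    refine ⟨p ^ e * n, Nat.mul_pos hpe hn, ⟨⟨w ^ (p ^ e * n), hwD⟩, Subtype.ext ?_⟩⟩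
    push_cast
    rw [hw, mul_pow]
  refine ⟨?_, ?_, ?_⟩
  · -- AV
    intro a b ha hb
    rcases ValuationRing.dvd_total (a : PowerSeries K) (b : PowerSeries K) with h | h
    · obtain ⟨n, hn, hd⟩ := key a b h
      exact ⟨n, hn, Or.inl hd⟩
    · obtain ⟨n, hn, hd⟩ := key b a h
      exact ⟨n, hn, Or.inr hd⟩
  · -- integral closure
    set A := HahnSeries.ofPowerSeries ℤ K with hAdef
    have hA : algebraMap (PowerSeries K) (LaurentSeries K) = A :=
      RingHom.ext fun f => congrFun LaurentSeries.coe_algebraMap f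
    intro x
    constructor
    · intro hx
      obtain ⟨P, hPm, hPev⟩ := hx
      have hlift : P.map (D.map A).subtype ∈
          Polynomial.lifts (algebraMap (PowerSeries K) (LaurentSeries K)) := by
        rw [Polynomial.lifts_iff_coeff_lifts]
        intro i
        rw [Polynomial.coeff_map]
        obtain ⟨f, -, hf⟩ := (P.coeff i).2
        exact ⟨f, by rw [hA]; exact hf⟩
      obtain ⟨q, hqmap, -, hqmonic⟩ :=
        Polynomial.lifts_and_degree_eq_and_monic hlift (hPm.map _)
      have hint : IsIntegral (PowerSeries K) x := by
        refine ⟨q, hqmonic, ?_⟩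
        rw [Polynomial.eval₂_eq_eval_map, hqmap, ← Polynomial.eval₂_eq_eval_map]
        exact hPev
      obtain ⟨f, hf⟩ := IsIntegrallyClosed.isIntegral_iff.mp hint
      exact RingHom.mem_range.mpr ⟨f, by rw [← hA]; exact hf⟩
    · intro hx
      obtain ⟨f, rfl⟩ := RingHom.mem_range.mp hx
      obtain ⟨n, hn, hcn⟩ := hroot (PowerSeries.constantCoeff f)
      obtain ⟨hfD, -, -⟩ := main_pow p k hD₁ hme f hcn
      set N := p ^ e * n with hNdef
      have hNpos : 0 < N := Nat.mul_pos hpe hn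
      have hmem : A f ^ N ∈ D.map A := ⟨f ^ N, hfD, map_pow A f N⟩
      refine ⟨Polynomial.X ^ N - Polynomial.C (⟨A f ^ N, hmem⟩ : ↥(D.map A)),
        Polynomial.monic_X_pow_sub_C _ hNpos.ne', ?_⟩
      simp only [Polynomial.eval₂_sub, Polynomial.eval₂_X_pow, Polynomial.eval₂_C]
      exact sub_eq_zero_of_eq rfl
  · -- API
    rintro ⟨n, hn, hk⟩ S hSne hS0
    set N := p ^ e * n with hNdef
    have hNpos : 0 < N := Nat.mul_pos hpe hn
    have hall : ∀ f : PowerSeries K, f ^ N ∈ D := fun f =>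
      (main_pow p k hD₁ hme f (hk _)).1
    set O : Set ℕ := {o | ∃ a ∈ S, ((a : PowerSeries K)).order = (o : ℕ∞)} with hOdef
    have horder_fin : ∀ a ∈ S, ∃ o : ℕ, ((a : PowerSeries K)).order = (o : ℕ∞) := by
      intro a ha
      have hne : (a : PowerSeries K) ≠ 0 := fun h => hS0 a ha (Subtype.ext h)
      have hlt := PowerSeries.order_finite_iff_ne_zero.mpr hne
      exact ⟨((a : PowerSeries K)).order.toNat, (ENat.coe_toNat hlt.ne).symm⟩
    have hOne : O.Nonempty := by
      obtain ⟨a, ha⟩ := hSne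
      obtain ⟨o, ho⟩ := horder_fin a ha
      exact ⟨o, a, ha, ho⟩
    obtain ⟨a₀, ha₀S, ha₀o⟩ := Nat.sInf_mem hOne
    have hdvd : ∀ a ∈ S, (a₀ : PowerSeries K) ∣ (a : PowerSeries K) := by
      intro a haS
      rcases ValuationRing.dvd_total (a₀ : PowerSeries K) (a : PowerSeries K) with h | h
      · exact h
      · obtain ⟨w, hw⟩ := h
        by_cases hwu : PowerSeries.constantCoeff w = 0
        · exfalso
          obtain ⟨oa, hoa⟩ := horder_fin a haS
          have hle : sInf O ≤ oa := Nat.sInf_le ⟨a, haS, hoa⟩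
          have horder : ((a₀ : PowerSeries K)).order =
              ((a : PowerSeries K)).order + w.order := by
            rw [hw, PowerSeries.order_mul]
          have hw1 : 1 ≤ w.order := by
            obtain ⟨v, hv⟩ := PowerSeries.X_dvd_iff.mpr hwu
            rw [hv, PowerSeries.order_mul, PowerSeries.order_X]
            exact le_self_add
          have hwne : w.order ≠ ⊤ := by
            intro htop
            rw [ha₀o, hoa, htop, add_top] at horder
            exact (WithTop.coe_ne_top) horder
          set ow : ℕ := w.order.toNat with howdef
          have how : (ow : ℕ∞) = w.order := ENat.coe_toNat hwne
          rw [ha₀o, hoa, ← how] at horder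
          rw [← how] at hw1
          have heq : sInf O = oa + ow := by exact_mod_cast horder
          have how1 : 1 ≤ ow := by exact_mod_cast hw1
          omega
        · refine ⟨w⁻¹, ?_⟩
          rw [hw, mul_assoc, PowerSeries.mul_inv_cancel w hwu, mul_one]
    refine ⟨N, hNpos, ⟨a₀ ^ N, ?_⟩⟩
    show Ideal.span ((fun a => a ^ N) '' S) = Ideal.span {a₀ ^ N}
    apply le_antisymm
    · rw [Ideal.span_le]
      rintro _ ⟨a, haS, rfl⟩
      obtain ⟨w, hw⟩ := hdvd a haS
      have heq : a ^ N = a₀ ^ N * ⟨w ^ N, hall w⟩ := by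
        apply Subtype.ext
        push_cast
        rw [hw, mul_pow]
      rw [SetLike.mem_coe, Ideal.mem_span_singleton]
      exact ⟨_, heq⟩
    · rw [Ideal.span_singleton_le_iff_mem]
      exact Ideal.subset_span ⟨a₀, ha₀S, rfl⟩
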